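/- The past mask P_{[a,b]} m is sufficient for the globally context: for any three-valued signal s and any time t with m(t) = true, G_{[a,b]}(s|_{P_{[a,b]}m})(t) = G_{[a,b]}(s)(t). -/
import Mathlib

inductive TV : Type | T | F | U
deriving DecidableEq

open TV Set Pointwise

def maskApply (s : ℝ → TV) (m : ℝ → Bool) : ℝ → TV :=
  fun t => if m t then s t else TV.U

def tvNot : TV → TV
  | TV.T => TV.F | TV.F => TV.T | TV.U => TV.U

def tvOr : TV → TV → TV
  | TV.T, _ => TV.T
  | _, TV.T => TV.T
  | TV.F, TV.F => TV.F
  | _, _ => TV.U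

def tvAnd : TV → TV → TV
  | TV.F, _ => TV.F
  | _, TV.F => TV.F
  | TV.T, TV.T => TV.T
  | _, _ => TV.U

open Classical in
noncomputable def evOp (a b : ℝ) (s : ℝ → TV) : ℝ → TV :=
  fun t =>
    if ∃ t' ∈ Set.Icc (t + a) (t + b), s t' = TV.T then TV.T
    else if ∀ t' ∈ Set.Icc (t + a) (t + b), s t' = TV.F then TV.F
    else TV.U

open Classical in
noncomputable def glOp (a b : ℝ) (s : ℝ → TV) : ℝ → TV :=
  fun t =>
    if ∃ t' ∈ Set.Icc (t + a) (t + b), s t' = TV.F then TV.F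
    else if ∀ t' ∈ Set.Icc (t + a) (t + b), s t' = TV.T then TV.T
    else TV.U

open Classical in
noncomputable def pastMask (a b : ℝ) (m : ℝ → Bool) : ℝ → Bool :=
  fun t => decide (∃ t'' ∈ Set.Icc (t - b) (t - a) ∩ Set.Ici (0:ℝ), m t'' = true)

def orMask (s : ℝ → TV) : ℝ → Bool := fun t => !(s t == TV.T)

def andMask (s : ℝ → TV) : ℝ → Bool := fun t => !(s t == TV.F)

def Hset (a b : ℝ) (S : Set ℝ) : Set ℝ := {t | Set.Icc (t - b) (t - a) ⊆ S}

def Pset (a b : ℝ) (S : Set ℝ) : Set ℝ := {t | ∃ t' ∈ Set.Icc (t - b) (t - a), t' ∈ S}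
theorem pastMask_sufficient_globally (a b : ℝ) (ha : 0 ≤ a) (hab : a ≤ b)
    (m : ℝ → Bool) (s : ℝ → TV) (t : ℝ) (ht : 0 ≤ t) (hm : m t = true) :
    glOp a b (maskApply s (pastMask a b m)) t = glOp a b s t := by
  have heq : ∀ t' ∈ Set.Icc (t + a) (t + b),
      maskApply s (pastMask a b m) t' = s t' := by
    intro t' ht'
    have hmask : pastMask a b m t' = true := by
      simp only [pastMask, decide_eq_true_eq]
      exact ⟨t, ⟨⟨by linarith [ht'.2], by linarith [ht'.1]⟩, ht⟩, hm⟩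
    simp [maskApply, hmask]
  simp only [glOp]
  have h1 : (∃ t' ∈ Set.Icc (t + a) (t + b), maskApply s (pastMask a b m) t' = TV.F)
      = (∃ t' ∈ Set.Icc (t + a) (t + b), s t' = TV.F) := by
    apply propext; constructor
    · rintro ⟨x, hx, h⟩; exact ⟨x, hx, (heq x hx) ▸ h⟩
    · rintro ⟨x, hx, h⟩; exact ⟨x, hx, (heq x hx).trans h⟩
  have h2 : (∀ t' ∈ Set.Icc (t + a) (t + b), maskApply s (pastMask a b m) t' = TV.T)
      = (∀ t' ∈ Set.Icc (t + a) (t + b), s t' = TV.T) := by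
    apply propext; constructor
    · intro h x hx; exact (heq x hx) ▸ h x hx
    · intro h x hx; exact (heq x hx).trans (h x hx)
  rw [h1, h2]
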